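/- Let X be a quasi-normed space with modulus of concavity ρ, i.e. ‖x+y‖ ≤ ρ(‖x‖+‖y‖) for all x,y. If r is defined by 2^(1/r - 1) = ρ, then for any finite sequence x₁,…,xₙ in X one has ‖x₁+⋯+xₙ‖ ≤ 4^(1/r) (‖x₁‖^r + ⋯ + ‖xₙ‖^r)^(1/r). (A quantitative form of the Aoki–Rolewicz theorem.) -/

import Mathlib

open List

section ARaux

variable {X : Type*} [AddCommGroup X]

/-- merging two coins with the same bound is lossless -/
private lemma AR_pair (q : X → ℝ) (r : ℝ)
    (htri' : ∀ x y, q (x + y) ≤ (2:ℝ) ^ (1/r - 1) * (q x + q y))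
    {x y : X} {A : ℝ} (hx : q x ≤ A) (hy : q y ≤ A) :
    q (x + y) ≤ (2:ℝ) ^ (1/r) * A := by
  have hρ : (0:ℝ) < (2:ℝ) ^ (1/r - 1) := Real.rpow_pos_of_pos two_pos _
  have h2 : (2:ℝ) ^ (1/r - 1) * 2 = (2:ℝ) ^ (1/r) := by
    rw [show (1/r : ℝ) = (1/r - 1) + 1 by ring, Real.rpow_add_one (by norm_num : (2:ℝ) ≠ 0)]
    ring
  calc q (x + y) ≤ (2:ℝ) ^ (1/r - 1) * (q x + q y) := htri' x y
    _ ≤ (2:ℝ) ^ (1/r - 1) * (2 * A) := by nlinarith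
    _ = (2:ℝ) ^ (1/r) * A := by rw [← h2]; ring

/-- find a duplicate under f, extracting a permutation -/
private lemma AR_dup {α β : Type*} (f : α → β) :
    ∀ l : List α, ¬ (l.map f).Nodup → ∃ a b t, l.Perm (a :: b :: t) ∧ f a = f b := by
  classical
  intro l
  induction l with
  | nil => simp
  | cons c l ih =>
    intro h
    rw [List.map_cons, List.nodup_cons] at h
    by_cases hnd : (l.map f).Nodup
    · have hmem : f c ∈ l.map f := by tauto
      obtain ⟨b, hb, hfb⟩ := List.mem_map.1 hmem
      exact ⟨c, b, l.erase b, List.Perm.cons c (List.perm_cons_erase hb), hfb.symm⟩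
    · obtain ⟨a, b, t, hperm, hf⟩ := ih hnd
      refine ⟨a, b, c :: t, ?_, hf⟩
      calc c :: l ~ c :: a :: b :: t := List.Perm.cons c hperm
        _ ~ a :: c :: b :: t := List.Perm.swap a c _
        _ ~ a :: b :: c :: t := List.Perm.cons a (List.Perm.swap b c _)

/-- extract a maximal element -/
private lemma AR_extract_max {α : Type*} (f : α → ℤ) (l : List α) (hne : l ≠ []) :
    ∃ m t, l.Perm (m :: t) ∧ ∀ a ∈ l, f a ≤ f m := by
  classical
  have hsome : (List.argmax f l).isSome := by
    rw [Option.isSome_iff_ne_none]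
    simpa [List.argmax_eq_none]
  rcases Option.isSome_iff_exists.mp hsome with ⟨m, hm⟩
  exact ⟨m, l.erase m, List.perm_cons_erase (List.argmax_mem hm),
    fun a ha => List.le_of_mem_argmax ha hm⟩

/-- coins at pairwise distinct levels, all ≤ K : telescoping bound -/
private lemma AR_distinct (q : X → ℝ) (r : ℝ)
    (hq00 : q 0 = 0) (hr : 0 < r)
    (htri' : ∀ x y, q (x + y) ≤ (2:ℝ) ^ (1/r - 1) * (q x + q y)) :
    ∀ (N : ℕ) (l : List (X × ℤ)), l.length = N →
      (∀ p ∈ l, q p.1 ≤ (2:ℝ) ^ ((p.2 : ℝ)/r)) →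
      (l.map Prod.snd).Nodup →
      ∀ K : ℤ, (∀ p ∈ l, p.2 ≤ K) →
      q ((l.map Prod.fst).sum) ≤ (2:ℝ) ^ (1/r) * (2:ℝ) ^ ((K : ℝ)/r) := by
  classical
  intro N
  induction N using Nat.strong_induction_on with
  | _ N ih =>
    intro l hlen hcoin hnd K hK
    rcases eq_or_ne l [] with rfl | hlne
    · simp only [List.map_nil, List.sum_nil, hq00]
      exact mul_nonneg (Real.rpow_nonneg (by norm_num) _) (Real.rpow_nonneg (by norm_num) _)
    obtain ⟨m, t, hperm, hmax⟩ := AR_extract_max Prod.snd l hlne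
    have hmmem : m ∈ l := hperm.mem_iff.2 (List.mem_cons_self)
    have hndmt : ((m :: t).map Prod.snd).Nodup := ((hperm.map Prod.snd).nodup_iff).1 hnd
    rw [List.map_cons, List.nodup_cons] at hndmt
    have htmem : ∀ a ∈ t, a ∈ l := fun a ha => hperm.mem_iff.2 (List.mem_cons_of_mem _ ha)
    have hrestlev : ∀ a ∈ t, a.2 ≤ m.2 - 1 := by
      intro a ha
      have h1 : a.2 ≤ m.2 := hmax a (htmem a ha)
      have h2 : a.2 ≠ m.2 := by
        intro h
        exact hndmt.1 (by rw [← h]; exact List.mem_map_of_mem (f := Prod.snd) ha)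
      omega
    have hlent : t.length = N - 1 := by
      have := hperm.length_eq
      rw [hlen] at this
      simp at this
      omega
    have hNpos : 0 < N := by
      rw [← hlen]
      exact List.length_pos_iff.2 hlne
    have hrestbound := ih (N - 1) (by omega) t hlent
      (fun p hp => hcoin p (htmem p hp)) hndmt.2 (m.2 - 1) hrestlev
    have hsum : (l.map Prod.fst).sum = m.1 + (t.map Prod.fst).sum := by
      rw [List.Perm.sum_eq (List.Perm.map Prod.fst hperm), List.map_cons, List.sum_cons]
    set A : ℝ := (2:ℝ) ^ ((m.2 : ℝ)/r) with hA
    have hArw : (2:ℝ) ^ (1/r) * (2:ℝ) ^ (((m.2 - 1 : ℤ) : ℝ)/r) = A := by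
      rw [hA, ← Real.rpow_add two_pos]
      congr 1
      push_cast
      field_simp
      ring
    have hx : q m.1 ≤ A := hcoin m hmmem
    have hy : q (t.map Prod.fst).sum ≤ A := by
      rw [← hArw]; exact hrestbound
    have hkey : q ((l.map Prod.fst).sum) ≤ (2:ℝ) ^ (1/r) * A := by
      rw [hsum]; exact AR_pair q r htri' hx hy
    refine hkey.trans ?_
    have hAK : A ≤ (2:ℝ) ^ ((K : ℝ)/r) := by
      apply Real.rpow_le_rpow_of_exponent_le one_le_two
      have hm2K : (m.2 : ℝ) ≤ (K : ℝ) := by exact_mod_cast hK m hmmem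
      gcongr
    exact mul_le_mul_of_nonneg_left hAK (Real.rpow_nonneg (by norm_num) _)

/-- main coin lemma: any coins -/
private lemma AR_coins (q : X → ℝ) (r : ℝ)
    (hq00 : q 0 = 0) (hr : 0 < r)
    (htri' : ∀ x y, q (x + y) ≤ (2:ℝ) ^ (1/r - 1) * (q x + q y)) :
    ∀ (N : ℕ) (l : List (X × ℤ)), l.length = N →
      (∀ p ∈ l, q p.1 ≤ (2:ℝ) ^ ((p.2 : ℝ)/r)) →
      q ((l.map Prod.fst).sum) ≤
        (2 * (l.map (fun p => (2:ℝ) ^ ((p.2 : ℝ)))).sum) ^ (1/r) := by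
  classical
  intro N
  induction N using Nat.strong_induction_on with
  | _ N ih =>
    intro l hlen hcoin
    by_cases hnd : (l.map Prod.snd).Nodup
    · rcases eq_or_ne l [] with rfl | hlne
      · simp only [List.map_nil, List.sum_nil, hq00, mul_zero]
        rw [Real.zero_rpow (one_div_ne_zero hr.ne')]
      · obtain ⟨mx, tx, hperm, hmax⟩ := AR_extract_max Prod.snd l hlne
        have h1 := AR_distinct q r hq00 hr htri' N l hlen hcoin hnd mx.2 hmax
        refine h1.trans ?_
        have hD : (2:ℝ) ^ ((mx.2 : ℝ)) ≤ (l.map (fun p => (2:ℝ) ^ ((p.2 : ℝ)))).sum := by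
          apply List.single_le_sum
          · intro y hy
            obtain ⟨p, _, rfl⟩ := List.mem_map.1 hy
            exact Real.rpow_nonneg (by norm_num) _
          · exact List.mem_map_of_mem (hperm.mem_iff.2 (List.mem_cons_self))
        have heq : (2:ℝ) ^ (1/r) * (2:ℝ) ^ ((mx.2 : ℝ)/r)
            = (2 * (2:ℝ) ^ ((mx.2 : ℝ))) ^ (1/r) := by
          rw [Real.mul_rpow (by norm_num) (Real.rpow_nonneg (by norm_num) _)]
          congr 1
          rw [← Real.rpow_mul (by norm_num : (0:ℝ) ≤ 2)]
          congr 1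
          ring
        rw [heq]
        exact Real.rpow_le_rpow (by positivity) (by linarith) (by positivity)
    · obtain ⟨a, b, t, hperm, hab⟩ := AR_dup Prod.snd l hnd
      have hamem : a ∈ l := hperm.mem_iff.2 (List.mem_cons_self)
      have hbmem : b ∈ l := hperm.mem_iff.2 (List.mem_cons_of_mem _ (List.mem_cons_self))
      have htmem : ∀ p ∈ t, p ∈ l := fun p hp =>
        hperm.mem_iff.2 (List.mem_cons_of_mem _ (List.mem_cons_of_mem _ hp))
      set l' : List (X × ℤ) := (a.1 + b.1, a.2 + 1) :: t with hl'
      have hlenN : N = t.length + 2 := by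
        rw [← hlen, hperm.length_eq]; simp
      have hcoin' : ∀ p ∈ l', q p.1 ≤ (2:ℝ) ^ ((p.2 : ℝ)/r) := by
        intro p hp
        rcases List.mem_cons.1 hp with rfl | hp'
        · have hxa : q a.1 ≤ (2:ℝ) ^ ((a.2 : ℝ)/r) := hcoin a hamem
          have hxb : q b.1 ≤ (2:ℝ) ^ ((a.2 : ℝ)/r) := by
            have := hcoin b hbmem
            rwa [show (b.2 : ℝ) = (a.2 : ℝ) by exact_mod_cast congrArg Int.cast hab.symm] at this
          have hres := AR_pair q r htri' hxa hxb
          refine hres.trans (le_of_eq ?_)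
          rw [← Real.rpow_add two_pos]
          congr 1
          push_cast
          field_simp
          ring
        · exact hcoin p (htmem p hp')
      have hsum' : (l.map Prod.fst).sum = (l'.map Prod.fst).sum := by
        rw [List.Perm.sum_eq (hperm.map Prod.fst)]
        simp [hl', add_assoc]
      have hden : (l.map (fun p => (2:ℝ) ^ ((p.2 : ℝ)))).sum
          = (l'.map (fun p => (2:ℝ) ^ ((p.2 : ℝ)))).sum := by
        rw [List.Perm.sum_eq (hperm.map (fun p => (2:ℝ) ^ ((p.2 : ℝ))))]
        simp only [hl', List.map_cons, List.sum_cons]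
        have hb2 : (b.2 : ℝ) = (a.2 : ℝ) := by exact_mod_cast congrArg Int.cast hab.symm
        have h21 : (2:ℝ) ^ (((a.2 + 1 : ℤ) : ℝ)) = (2:ℝ) ^ ((a.2 : ℝ)) * 2 := by
          push_cast
          rw [Real.rpow_add_one (by norm_num : (2:ℝ) ≠ 0)]
        rw [hb2, h21]
        ring
      rw [hsum', hden]
      exact ih (N - 1) (by omega) l' (by simp [hl']; omega) hcoin'

end ARaux

/-- Quantitative Aoki–Rolewicz: if `q` is a quasi-norm with modulus of
concavity `ρ` and `2^(1/r - 1) = ρ`, then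
`q (x₁ + ⋯ + xₙ) ≤ 4^(1/r) * (q x₁ ^ r + ⋯ + q xₙ ^ r)^(1/r)`. -/
theorem aoki_rolewicz_quantitative {X : Type*} [AddCommGroup X] [Module ℂ X]
    (q : X → ℝ) (ρ r : ℝ) (hρ : 1 ≤ ρ)
    (hq0 : ∀ x, 0 ≤ q x) (hqz : ∀ x, q x = 0 ↔ x = 0)
    (hhom : ∀ (a : ℂ) (x : X), q (a • x) = ‖a‖ * q x)
    (htri : ∀ x y, q (x + y) ≤ ρ * (q x + q y))
    (hr : 0 < r) (hrρ : (2 : ℝ) ^ (1 / r - 1) = ρ) :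
    ∀ (n : ℕ) (x : Fin n → X),
      q (∑ i, x i) ≤ (4 : ℝ) ^ (1 / r) * (∑ i, q (x i) ^ r) ^ (1 / r) := by
  classical
  intro n x
  have hq00 : q 0 = 0 := (hqz 0).mpr rfl
  have htri' : ∀ a b, q (a + b) ≤ (2:ℝ) ^ (1/r - 1) * (q a + q b) := by
    intro a b; rw [hrρ]; exact htri a b
  set S : Finset (Fin n) := Finset.univ.filter (fun i => x i ≠ 0) with hS
  set k : Fin n → ℤ := fun i => ⌈Real.logb 2 (q (x i) ^ r)⌉ with hk
  -- coin properties on S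
  have hqpos : ∀ i ∈ S, 0 < q (x i) ^ r := by
    intro i hi
    have hxi : x i ≠ 0 := by simpa [hS] using hi
    have hq : 0 < q (x i) :=
      lt_of_le_of_ne (hq0 _) (fun h => hxi ((hqz _).1 h.symm))
    exact Real.rpow_pos_of_pos hq r
  have hcoin : ∀ i ∈ S, q (x i) ≤ (2:ℝ) ^ ((k i : ℝ)/r) := by
    intro i hi
    have ht := hqpos i hi
    have h1 : q (x i) ^ r ≤ (2:ℝ) ^ ((k i : ℝ)) := by
      calc q (x i) ^ r = (2:ℝ) ^ (Real.logb 2 (q (x i) ^ r)) :=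
            (Real.rpow_logb two_pos (by norm_num) ht).symm
        _ ≤ _ := Real.rpow_le_rpow_of_exponent_le one_le_two (Int.le_ceil _)
    have h2 := Real.rpow_le_rpow (Real.rpow_nonneg (hq0 _) r) h1 (one_div_nonneg.2 hr.le)
    rwa [← Real.rpow_mul (hq0 _), mul_one_div_cancel hr.ne', Real.rpow_one,
      ← Real.rpow_mul (by norm_num : (0:ℝ) ≤ 2), mul_one_div] at h2
  have hden : ∀ i ∈ S, (2:ℝ) ^ ((k i : ℝ)) ≤ 2 * q (x i) ^ r := by
    intro i hi
    have ht := hqpos i hi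
    have h1 : ((k i : ℝ)) ≤ Real.logb 2 (q (x i) ^ r) + 1 :=
      le_of_lt (Int.ceil_lt_add_one _)
    calc (2:ℝ) ^ ((k i : ℝ)) ≤ (2:ℝ) ^ (Real.logb 2 (q (x i) ^ r) + 1) :=
          Real.rpow_le_rpow_of_exponent_le one_le_two h1
      _ = 2 * q (x i) ^ r := by
          rw [Real.rpow_add_one (by norm_num : (2:ℝ) ≠ 0),
            Real.rpow_logb two_pos (by norm_num) ht]
          ring
  -- the coin list
  set l : List (X × ℤ) := S.toList.map (fun i => (x i, k i)) with hl
  have hcoinl : ∀ p ∈ l, q p.1 ≤ (2:ℝ) ^ ((p.2 : ℝ)/r) := by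
    intro p hp
    obtain ⟨i, hi, rfl⟩ := List.mem_map.1 hp
    exact hcoin i (by rwa [← Finset.mem_toList])
  have hmain := AR_coins q r hq00 hr htri' l.length l rfl hcoinl
  -- identify the sum
  have hsum1 : (l.map Prod.fst).sum = ∑ i, x i := by
    rw [hl, List.map_map, Finset.sum_map_toList]
    have h0 : (Prod.fst ∘ fun i => (x i, k i)) = x := rfl
    rw [h0]
    exact Finset.sum_subset (Finset.subset_univ S) (by
      intro i _ hi
      by_contra hne
      exact hi (by simp [hS, hne]))
  -- bound the denominators
  have hDbound : (l.map (fun p => (2:ℝ) ^ ((p.2 : ℝ)))).sum ≤ 2 * ∑ i, q (x i) ^ r := by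
    rw [hl, List.map_map, Finset.sum_map_toList]
    calc ∑ i ∈ S, ((fun p : X × ℤ => (2:ℝ) ^ ((p.2 : ℝ))) ∘ fun i => (x i, k i)) i
        = ∑ i ∈ S, (2:ℝ) ^ ((k i : ℝ)) := rfl
      _ ≤ ∑ i ∈ S, 2 * q (x i) ^ r :=
          Finset.sum_le_sum hden
      _ = 2 * ∑ i ∈ S, q (x i) ^ r := by rw [Finset.mul_sum]
      _ ≤ 2 * ∑ i, q (x i) ^ r := by
          have := Finset.sum_le_sum_of_subset_of_nonneg (Finset.subset_univ S)
            (fun i _ _ => Real.rpow_nonneg (hq0 (x i)) r)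
          linarith
  have hSig : (0:ℝ) ≤ ∑ i, q (x i) ^ r :=
    Finset.sum_nonneg (fun i _ => Real.rpow_nonneg (hq0 (x i)) r)
  rw [hsum1] at hmain
  refine hmain.trans ?_
  calc (2 * (l.map (fun p => (2:ℝ) ^ ((p.2 : ℝ)))).sum) ^ (1/r)
      ≤ (4 * ∑ i, q (x i) ^ r) ^ (1/r) := by
        apply Real.rpow_le_rpow ?_ (by linarith) (one_div_nonneg.2 hr.le)
        have : (0:ℝ) ≤ (l.map (fun p => (2:ℝ) ^ ((p.2 : ℝ)))).sum := by
          apply List.sum_nonneg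
          intro y hy
          obtain ⟨p, _, rfl⟩ := List.mem_map.1 hy
          exact Real.rpow_nonneg (by norm_num) _
        linarith
    _ = (4:ℝ) ^ (1/r) * (∑ i, q (x i) ^ r) ^ (1/r) :=
        Real.mul_rpow (by norm_num) hSig
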